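/- Let K ≥ 1 be an integer and p ≥ 1 a real number. Define the ℓ_p loss ℓ(u, q) = (∑_{i=1}^K |u_i − q_i|^p)^{1/p} for u, q ∈ ℝ^K. Then for every q in the probability simplex 𝒴 and all a, b ∈ ℝ^K, |ℓ(S(a), q) − ℓ(S(b), q)| ≤ √2 · K · ‖a − b‖₂. -/

import Mathlib

open scoped BigOperators

/-- The softmax function `S(x)_i = exp(x_i) / ∑_j exp(x_j)` on `ℝ^K`. -/
noncomputable def softmax {K : ℕ} (x : Fin K → ℝ) : Fin K → ℝ :=
  fun i => Real.exp (x i) / ∑ j, Real.exp (x j)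

section Aux

lemma lp_le_l1 {K : ℕ} {p : ℝ} (hp : 1 ≤ p) (w : Fin K → ℝ) :
    (∑ i, |w i| ^ p) ^ (1 / p) ≤ ∑ i, |w i| := by
  have hp0 : 0 < p := lt_of_lt_of_le one_pos hp
  set T : ℝ := ∑ i, |w i| with hT
  have hT0 : 0 ≤ T := Finset.sum_nonneg fun i _ => abs_nonneg _
  have key : ∑ i, |w i| ^ p ≤ T ^ p := by
    have h1 : ∀ i : Fin K, |w i| ^ p ≤ |w i| * T ^ (p - 1) := by
      intro i
      have hwi : |w i| ≤ T :=
        Finset.single_le_sum (fun j _ => abs_nonneg (w j)) (Finset.mem_univ i)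
      have : |w i| ^ p = |w i| ^ (1 : ℝ) * |w i| ^ (p - 1) := by
        rw [← Real.rpow_add' (abs_nonneg _) (by linarith)]
        ring_nf
      rw [this, Real.rpow_one]
      exact mul_le_mul_of_nonneg_left
        (Real.rpow_le_rpow (abs_nonneg _) hwi (by linarith)) (abs_nonneg _)
    calc ∑ i, |w i| ^ p ≤ ∑ i, |w i| * T ^ (p - 1) := Finset.sum_le_sum fun i _ => h1 i
      _ = T * T ^ (p - 1) := by rw [← Finset.sum_mul]
      _ = T ^ (1 : ℝ) * T ^ (p - 1) := by rw [Real.rpow_one]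
      _ = T ^ p := by rw [← Real.rpow_add' hT0 (by linarith)]; ring_nf
  calc (∑ i, |w i| ^ p) ^ (1 / p) ≤ (T ^ p) ^ (1 / p) :=
        Real.rpow_le_rpow (Finset.sum_nonneg fun i _ => Real.rpow_nonneg (abs_nonneg _) _)
          key (by positivity)
    _ = T := by
        rw [← Real.rpow_mul hT0, mul_one_div_cancel (ne_of_gt hp0), Real.rpow_one]

lemma softmax_grad_bound {K : ℕ} (x c : Fin K → ℝ) (i : Fin K) :
    |softmax x i * (c i - ∑ j, softmax x j * c j)| ≤
      Real.sqrt 2 * Real.sqrt (∑ j, c j ^ 2) := by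
  have hden : (0 : ℝ) < ∑ j, Real.exp (x j) :=
    Finset.sum_pos (fun j _ => Real.exp_pos _) ⟨i, Finset.mem_univ i⟩
  have hS0 : ∀ j, 0 ≤ softmax x j := fun j =>
    div_nonneg (Real.exp_pos _).le hden.le
  have hSsum : ∑ j, softmax x j = 1 := by
    simp only [softmax, ← Finset.sum_div]
    exact div_self (ne_of_gt hden)
  have hS1 : ∀ j, softmax x j ≤ 1 := by
    intro j
    calc softmax x j ≤ ∑ k, softmax x k :=
          Finset.single_le_sum (fun k _ => hS0 k) (Finset.mem_univ j)
      _ = 1 := hSsum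
  set S : Fin K → ℝ := softmax x with hSdef
  set d : Fin K → ℝ := fun j => (if j = i then (1 : ℝ) else 0) - S j with hd
  have hrw : c i - ∑ j, S j * c j = ∑ j, d j * c j := by
    simp only [hd, sub_mul, Finset.sum_sub_distrib, ite_mul, one_mul, zero_mul]
    rw [Finset.sum_ite_eq' Finset.univ i c]
    simp
  have hdsq : ∑ j, d j ^ 2 ≤ 2 := by
    have h1 : ∀ j, d j ^ 2 ≤ (if j = i then (1 : ℝ) else 0) + S j := by
      intro j
      have habs : |d j| ≤ (if j = i then (1 : ℝ) else 0) + S j := by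
        refine (abs_sub _ _).trans ?_
        rw [abs_of_nonneg (hS0 j), abs_of_nonneg (by positivity)]
      have hle1 : |d j| ≤ 1 := by
        have h0 := hS0 j
        have h1 := hS1 j
        simp only [hd, hSdef]
        rw [abs_sub_le_iff]
        constructor <;> (split <;> linarith)
      calc d j ^ 2 = |d j| * |d j| := by rw [← sq_abs, sq]
        _ ≤ 1 * |d j| := mul_le_mul_of_nonneg_right hle1 (abs_nonneg _)
        _ = |d j| := one_mul _
        _ ≤ _ := habs
    calc ∑ j, d j ^ 2 ≤ ∑ j, ((if j = i then (1 : ℝ) else 0) + S j) :=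
          Finset.sum_le_sum fun j _ => h1 j
      _ = 1 + 1 := by rw [Finset.sum_add_distrib, hSsum, Finset.sum_ite_eq' Finset.univ i]; simp
      _ = 2 := by norm_num
  have hCS : |∑ j, d j * c j| ≤ Real.sqrt 2 * Real.sqrt (∑ j, c j ^ 2) := by
    have hdd : Real.sqrt (∑ j, d j ^ 2) ≤ Real.sqrt 2 := Real.sqrt_le_sqrt hdsq
    have hcc : (0 : ℝ) ≤ Real.sqrt (∑ j, c j ^ 2) := Real.sqrt_nonneg _
    rw [abs_le]
    constructor
    · have h2 := Real.sum_mul_le_sqrt_mul_sqrt Finset.univ (fun j => -d j) c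
      simp only [neg_mul, Finset.sum_neg_distrib, neg_sq] at h2
      have : Real.sqrt (∑ j, d j ^ 2) * Real.sqrt (∑ j, c j ^ 2) ≤
          Real.sqrt 2 * Real.sqrt (∑ j, c j ^ 2) := mul_le_mul_of_nonneg_right hdd hcc
      nlinarith [h2]
    · have h2 := Real.sum_mul_le_sqrt_mul_sqrt Finset.univ d c
      have : Real.sqrt (∑ j, d j ^ 2) * Real.sqrt (∑ j, c j ^ 2) ≤
          Real.sqrt 2 * Real.sqrt (∑ j, c j ^ 2) := mul_le_mul_of_nonneg_right hdd hcc
      linarith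
  calc |S i * (c i - ∑ j, S j * c j)| = S i * |c i - ∑ j, S j * c j| := by
        rw [abs_mul, abs_of_nonneg (hS0 i)]
    _ ≤ 1 * |c i - ∑ j, S j * c j| :=
        mul_le_mul_of_nonneg_right (hS1 i) (abs_nonneg _)
    _ = |∑ j, d j * c j| := by rw [one_mul, hrw]
    _ ≤ _ := hCS

lemma softmax_coord_lip {K : ℕ} (a b : Fin K → ℝ) (i : Fin K) :
    |softmax a i - softmax b i| ≤ Real.sqrt 2 * Real.sqrt (∑ j, (a j - b j) ^ 2) := by
  set c : Fin K → ℝ := fun j => b j - a j with hc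
  set y : ℝ → Fin K → ℝ := fun t j => a j + t * c j with hy
  set g : ℝ → ℝ := fun t => softmax (y t) i with hg
  have hg0 : g 0 = softmax a i := by simp [hg, hy]
  have hg1 : g 1 = softmax b i := by simp [hg, hy, hc]
  set g' : ℝ → ℝ := fun t => softmax (y t) i * (c i - ∑ j, softmax (y t) j * c j) with hg'
  have hden : ∀ t : ℝ, (0 : ℝ) < ∑ j, Real.exp (y t j) := fun t =>
    Finset.sum_pos (fun j _ => Real.exp_pos _) ⟨i, Finset.mem_univ i⟩
  have hderiv : ∀ t : ℝ, HasDerivAt g (g' t) t := by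
    intro t
    have hlin : ∀ j : Fin K, HasDerivAt (fun s : ℝ => a j + s * c j) (c j) t := by
      intro j
      simpa using ((hasDerivAt_id t).mul_const (c j)).const_add (a j)
    have hnum : HasDerivAt (fun s : ℝ => Real.exp (a i + s * c i))
        (Real.exp (y t i) * c i) t := (hlin i).exp
    have hden' : HasDerivAt (fun s : ℝ => ∑ j, Real.exp (a j + s * c j))
        (∑ j, Real.exp (y t j) * c j) t := by
      exact HasDerivAt.fun_sum fun j _ => (hlin j).exp
    have hdiv := hnum.div hden' (ne_of_gt (hden t))
    have heq : (Real.exp (y t i) * c i * (∑ j, Real.exp (y t j)) -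
          Real.exp (y t i) * ∑ j, Real.exp (y t j) * c j) / (∑ j, Real.exp (y t j)) ^ 2
        = g' t := by
      have hD := hden t
      simp only [hg', softmax]
      have hsum : ∑ j, Real.exp (y t j) / (∑ k, Real.exp (y t k)) * c j
          = (∑ j, Real.exp (y t j) * c j) / (∑ k, Real.exp (y t k)) := by
        rw [Finset.sum_div]
        exact Finset.sum_congr rfl fun j _ => by rw [div_mul_eq_mul_div]
      rw [hsum]
      field_simp
    rw [heq] at hdiv
    exact hdiv
  have hbound : ∀ t : ℝ, ‖g' t‖ ≤ Real.sqrt 2 * Real.sqrt (∑ j, c j ^ 2) := by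
    intro t
    rw [Real.norm_eq_abs, hg']
    exact softmax_grad_bound (y t) c i
  have hmvt : ‖g 1 - g 0‖ ≤ Real.sqrt 2 * Real.sqrt (∑ j, c j ^ 2) := by
    refine norm_image_sub_le_of_norm_deriv_le_segment_01'
      (f' := g') (fun s _ => (hderiv s).hasDerivWithinAt) (fun s _ => hbound s)
  have hcsq : ∑ j, c j ^ 2 = ∑ j, (a j - b j) ^ 2 := by
    refine Finset.sum_congr rfl fun j _ => ?_
    rw [hc]; ring
  rw [← hcsq, ← hg0, ← hg1, abs_sub_comm]
  simpa [Real.norm_eq_abs] using hmvt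

end Aux

/-- The ℓ_p loss `ℓ(u,q) = (∑_i |u_i − q_i|^p)^{1/p}`, `p ≥ 1`, composed with the softmax,
is `√2·K`-Lipschitz with respect to the Euclidean norm, uniformly over labels `q` in the
probability simplex. -/
theorem lp_loss_softmax_lipschitz (K : ℕ) (hK : 1 ≤ K) (p : ℝ) (hp : 1 ≤ p)
    (q : Fin K → ℝ) (hq01 : ∀ i, q i ∈ Set.Icc (0 : ℝ) 1) (hqsum : ∑ i, q i = 1)
    (a b : Fin K → ℝ) :
    |(∑ i, |softmax a i - q i| ^ p) ^ (1 / p) - (∑ i, |softmax b i - q i| ^ p) ^ (1 / p)|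
      ≤ Real.sqrt 2 * K * Real.sqrt (∑ j, (a j - b j) ^ 2) := by
  set A : ℝ := (∑ i, |softmax a i - q i| ^ p) ^ (1 / p) with hA
  set B : ℝ := (∑ i, |softmax b i - q i| ^ p) ^ (1 / p) with hB
  set D : ℝ := (∑ i, |softmax a i - softmax b i| ^ p) ^ (1 / p) with hD
  have h1 : A ≤ D + B := by
    have h := Real.Lp_add_le (s := Finset.univ)
      (f := fun i => softmax a i - softmax b i) (g := fun i => softmax b i - q i) hp
    simpa only [sub_add_sub_cancel] using h
  have h2 : B ≤ D + A := by
    have h := Real.Lp_add_le (s := Finset.univ)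
      (f := fun i => softmax b i - softmax a i) (g := fun i => softmax a i - q i) hp
    simp only [sub_add_sub_cancel] at h
    have habs : ∀ i : Fin K, |softmax b i - softmax a i| = |softmax a i - softmax b i| :=
      fun i => abs_sub_comm _ _
    simp only [habs] at h
    exact h
  have hABD : |A - B| ≤ D := abs_sub_le_iff.2 ⟨by linarith, by linarith⟩
  have hD1 : D ≤ ∑ i, |softmax a i - softmax b i| :=
    lp_le_l1 hp fun i => softmax a i - softmax b i
  have hsum : ∑ i : Fin K, |softmax a i - softmax b i|
      ≤ ∑ _i : Fin K, Real.sqrt 2 * Real.sqrt (∑ j, (a j - b j) ^ 2) :=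
    Finset.sum_le_sum fun i _ => softmax_coord_lip a b i
  have hconst : ∑ _i : Fin K, Real.sqrt 2 * Real.sqrt (∑ j, (a j - b j) ^ 2)
      = Real.sqrt 2 * K * Real.sqrt (∑ j, (a j - b j) ^ 2) := by
    rw [Finset.sum_const, Finset.card_univ, Fintype.card_fin, nsmul_eq_mul]
    ring
  calc |A - B| ≤ D := hABD
    _ ≤ ∑ i, |softmax a i - softmax b i| := hD1
    _ ≤ _ := hsum
    _ = _ := hconst
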